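/- Let Y be a Banach space and f ∈ Y* with ‖f‖ = 1. Define T : ℝ ⊕_∞ Y → ℝ ⊕_∞ Y by T(a,y) = (a − f(y), y). Then the minimum modulus of T satisfies m(T) = 1/2. -/

import Mathlib

/-- The minimum modulus of a bounded operator. -/
noncomputable def minMod {X Y : Type*} [NormedAddCommGroup X] [NormedAddCommGroup Y]
    [NormedSpace ℝ X] [NormedSpace ℝ Y] (T : X →L[ℝ] Y) : ℝ :=
  sInf ((fun x => ‖T x‖) '' {x : X | ‖x‖ = 1})

/-- For Y Banach, f ∈ Y* with ‖f‖ = 1 and T(a,y) = (a - f(y), y) on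
ℝ ⊕_∞ Y, one has m(T) = 1/2. -/
theorem stmt_8
    (Y : Type*) [NormedAddCommGroup Y] [NormedSpace ℝ Y] [CompleteSpace Y]
    (f : Y →L[ℝ] ℝ) (hf : ‖f‖ = 1)
    (T : WithLp ⊤ (ℝ × Y) →L[ℝ] WithLp ⊤ (ℝ × Y))
    (hT : ∀ (a : ℝ) (y : Y),
      T ((WithLp.equiv ⊤ (ℝ × Y)).symm (a, y)) =
        (WithLp.equiv ⊤ (ℝ × Y)).symm (a - f y, y)) :
    minMod T = 1 / 2 := by
  set S := ((fun x => ‖T x‖) '' {x : WithLp ⊤ (ℝ × Y) | ‖x‖ = 1}) with hS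
  have hTx : ∀ x : WithLp ⊤ (ℝ × Y), ‖T x‖ = max |x.fst - f x.snd| ‖x.snd‖ := by
    intro x
    have h := hT x.fst x.snd
    have hx : (WithLp.equiv ⊤ (ℝ × Y)).symm (x.fst, x.snd) = x := rfl
    rw [hx] at h
    rw [h, WithLp.prod_norm_eq_sup]
    rfl
  have hnorm : ∀ x : WithLp ⊤ (ℝ × Y), ‖x‖ = max |x.fst| ‖x.snd‖ := by
    intro x
    rw [WithLp.prod_norm_eq_sup]
    rfl
  -- lower bound: every element of S is ≥ 1/2
  have hlb : ∀ s ∈ S, (1:ℝ)/2 ≤ s := by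
    rintro s ⟨x, hx1, rfl⟩
    simp only [Set.mem_setOf_eq] at hx1
    show 1/2 ≤ ‖T x‖
    rw [hTx x]
    by_contra h
    push_neg at h
    have h1 : |x.fst - f x.snd| < 1/2 := lt_of_le_of_lt (le_max_left _ _) h
    have h2 : ‖x.snd‖ < 1/2 := lt_of_le_of_lt (le_max_right _ _) h
    have hfy : |f x.snd| ≤ ‖x.snd‖ := by
      have := f.le_opNorm x.snd
      rwa [hf, one_mul] at this
    have : |x.fst| < 1 := by
      calc |x.fst| ≤ |x.fst - f x.snd| + |f x.snd| := by
              simpa using abs_add_le (x.fst - f x.snd) (f x.snd)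
        _ < 1/2 + 1/2 := by linarith [hfy.trans_lt h2]
        _ = 1 := by norm_num
    rw [hnorm x] at hx1
    have := le_of_eq hx1.symm
    rcases max_cases |x.fst| ‖x.snd‖ with ⟨he, _⟩ | ⟨he, _⟩ <;> rw [he] at hx1 <;> linarith
  have hne : S.Nonempty := by
    refine ⟨‖T ((WithLp.equiv ⊤ (ℝ × Y)).symm (1, 0))‖,
      ⟨(WithLp.equiv ⊤ (ℝ × Y)).symm (1, 0), ?_, rfl⟩⟩
    simp only [Set.mem_setOf_eq]
    rw [hnorm]
    simp
  have hbdd : BddBelow S := ⟨1/2, fun s hs => hlb s hs⟩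
  refine le_antisymm ?_ (le_csInf hne hlb)
  -- upper bound
  refine le_of_forall_pos_le_add fun ε hε => ?_
  set δ : ℝ := min ε (1/2) with hδdef
  have hδ : 0 < δ := lt_min hε (by norm_num)
  have hδ2 : δ ≤ 1/2 := min_le_right _ _
  obtain ⟨y₀, hy₀, hfy₀⟩ := f.exists_lt_apply_of_lt_opNorm (r := 1 - δ) (by rw [hf]; linarith)
  set y₁ : Y := if f y₀ < 0 then -y₀ else y₀ with hy₁def
  have hy₁n : ‖y₁‖ < 1 := by
    rw [hy₁def]; split <;> simpa using hy₀
  have hfy₁ : 1 - δ < f y₁ := by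
    rw [hy₁def]
    rcases abs_cases (f y₀) with ⟨he, h0⟩ | ⟨he, h0⟩
    · rw [if_neg (not_lt.mpr h0)]; rw [← he]; simpa using hfy₀
    · rw [if_pos h0, map_neg, ← he]; simpa using hfy₀
  have hfy₁' : f y₁ ≤ ‖y₁‖ := by
    have := f.le_opNorm y₁
    rw [hf, one_mul] at this
    exact (le_abs_self _).trans this
  set x : WithLp ⊤ (ℝ × Y) := (WithLp.equiv ⊤ (ℝ × Y)).symm (1, (1/2 : ℝ) • y₁) with hxdef
  have hx1 : x.fst = 1 := rfl
  have hx2 : x.snd = (1/2 : ℝ) • y₁ := rfl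
  have hxnorm : ‖x‖ = 1 := by
    rw [hnorm, hx1, hx2, norm_smul]
    simp only [abs_one]
    rw [max_eq_left]
    have : ‖(1/2 : ℝ)‖ = 1/2 := by norm_num
    rw [this]; nlinarith [norm_nonneg y₁]
  have hmem : ‖T x‖ ∈ S := ⟨x, hxnorm, rfl⟩
  have hval : ‖T x‖ ≤ 1/2 + ε := by
    rw [hTx, hx1, hx2, map_smul, norm_smul]
    have hfs : f y₁ < 1 := lt_of_le_of_lt hfy₁' hy₁n
    have h1 : |1 - (1/2 : ℝ) • f y₁| ≤ 1/2 + ε := by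
      rw [smul_eq_mul, abs_of_pos (by linarith)]
      have : δ ≤ ε := min_le_left _ _
      linarith
    have h2 : ‖(1/2 : ℝ)‖ * ‖y₁‖ ≤ 1/2 + ε := by
      have : ‖(1/2 : ℝ)‖ = 1/2 := by norm_num
      rw [this]; nlinarith [norm_nonneg y₁]
    exact max_le h1 h2
  exact (csInf_le hbdd hmem).trans hval
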